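/- Let X, Y : Fin n → ℝ, both centered, and let π be a uniformly random permutation. Define T̃ = (1/n)∑_i X_i Y_{π(i)}. Then Var(T̃) = μ₂ X̄ /(n-1), where μ₂ = (1/n)∑ Y_i² and X̄ = (1/n)∑ X_i². -/

import Mathlib

open Finset Equiv

/-- Column sum lemma: for fixed i, summing f (σ i) over all permutations. -/
lemma perm_col {n : ℕ} (f : Fin n → ℝ) (i : Fin n) :
    ∑ σ : Equiv.Perm (Fin n), f (σ i) = ((n-1).factorial : ℝ) * ∑ k, f k := by
  have hn : 0 < n := i.pos
  have hconst : ∀ j : Fin n, ∑ σ : Equiv.Perm (Fin n), f (σ j) =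
      ∑ σ : Equiv.Perm (Fin n), f (σ i) := by
    intro j
    apply Fintype.sum_equiv (Equiv.mulRight (Equiv.swap j i))
    intro σ
    simp [Equiv.Perm.mul_apply]
  have htot : ∑ j : Fin n, ∑ σ : Equiv.Perm (Fin n), f (σ j)
      = (n.factorial : ℝ) * ∑ k, f k := by
    rw [Finset.sum_comm]
    rw [Finset.sum_congr rfl (fun σ _ => Equiv.sum_comp σ f)]
    simp [Finset.card_univ, Fintype.card_perm, mul_comm]
  rw [Finset.sum_congr rfl (fun j _ => hconst j), Finset.sum_const,
    Finset.card_univ, Fintype.card_fin, nsmul_eq_mul] at htot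
  have hfac : (n.factorial : ℝ) = (n : ℝ) * ((n-1).factorial : ℝ) := by
    rw [← Nat.mul_factorial_pred hn.ne']; push_cast; ring
  have hne : (n : ℝ) ≠ 0 := by positivity
  apply mul_left_cancel₀ hne
  rw [htot, hfac]; ring

/-- Pair sums are constant over the second index. -/
lemma perm_pair_const {n : ℕ} (Y : Fin n → ℝ) (i j j' : Fin n)
    (hj : j ≠ i) (hj' : j' ≠ i) :
    ∑ σ : Equiv.Perm (Fin n), Y (σ i) * Y (σ j) =
      ∑ σ : Equiv.Perm (Fin n), Y (σ i) * Y (σ j') := by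
  apply Fintype.sum_equiv (Equiv.mulRight (Equiv.swap j j'))
  intro σ
  simp only [Equiv.coe_mulRight, Equiv.Perm.mul_apply]
  rw [Equiv.swap_apply_of_ne_of_ne (Ne.symm hj) (Ne.symm hj'),
    Equiv.swap_apply_right]

theorem stmt_9 (n : ℕ) (hn : 2 ≤ n) (X Y : Fin n → ℝ)
    (hX : ∑ i, X i = 0) (hY : ∑ i, Y i = 0) :
    (∑ π : Equiv.Perm (Fin n),
        (((1 / (n : ℝ)) * ∑ i, X i * Y (π i))
          - (∑ σ : Equiv.Perm (Fin n), (1 / (n : ℝ)) * ∑ i, X i * Y (σ i))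
              / (Nat.factorial n : ℝ)) ^ 2)
      / (Nat.factorial n : ℝ)
    = ((1 / (n : ℝ)) * ∑ i, (Y i) ^ 2) * ((1 / (n : ℝ)) * ∑ i, (X i) ^ 2)
        / ((n : ℝ) - 1) := by
  have hn0 : (0:ℕ) < n := by omega
  have hnR : (n : ℝ) ≠ 0 := by positivity
  have hn1R : (n : ℝ) - 1 ≠ 0 := by
    have : (2:ℝ) ≤ n := by exact_mod_cast hn
    linarith
  have hfacne : (n.factorial : ℝ) ≠ 0 := by
    exact_mod_cast n.factorial_ne_zero
  set A : ℝ := ∑ k, (Y k)^2 with hA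
  -- the mean is 0
  have hcolY : ∀ i : Fin n, ∑ σ : Equiv.Perm (Fin n), Y (σ i) = 0 := by
    intro i; rw [perm_col Y i, hY, mul_zero]
  have hmean : (∑ σ : Equiv.Perm (Fin n), (1 / (n : ℝ)) * ∑ i, X i * Y (σ i)) = 0 := by
    rw [← Finset.mul_sum, Finset.sum_comm]
    have : ∀ i : Fin n, ∑ σ : Equiv.Perm (Fin n), X i * Y (σ i) = 0 := by
      intro i; rw [← Finset.mul_sum, hcolY, mul_zero]
    rw [Finset.sum_congr rfl (fun i _ => this i), Finset.sum_const_zero, mul_zero]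
  -- D i i
  have hDii : ∀ i : Fin n, ∑ σ : Equiv.Perm (Fin n), Y (σ i) * Y (σ i)
      = ((n-1).factorial : ℝ) * A := by
    intro i
    have := perm_col (fun k => Y k * Y k) i
    simpa [hA, sq] using this
  -- D i j for j ≠ i
  have hDij : ∀ i j : Fin n, j ≠ i →
      ((n:ℝ) - 1) * (∑ σ : Equiv.Perm (Fin n), Y (σ i) * Y (σ j))
        = -(((n-1).factorial : ℝ) * A) := by
    intro i j hj
    have hrow : ∑ j : Fin n, ∑ σ : Equiv.Perm (Fin n), Y (σ i) * Y (σ j) = 0 := by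
      rw [Finset.sum_comm]
      have : ∀ σ : Equiv.Perm (Fin n), ∑ j : Fin n, Y (σ i) * Y (σ j) = 0 := by
        intro σ
        rw [← Finset.mul_sum, Equiv.sum_comp σ Y, hY, mul_zero]
      rw [Finset.sum_congr rfl (fun σ _ => this σ), Finset.sum_const_zero]
    rw [← Finset.add_sum_erase _ _ (Finset.mem_univ i)] at hrow
    have herase : ∑ k ∈ Finset.univ.erase i, ∑ σ : Equiv.Perm (Fin n), Y (σ i) * Y (σ k)
        = ((n:ℝ) - 1) * ∑ σ : Equiv.Perm (Fin n), Y (σ i) * Y (σ j) := by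
      rw [Finset.sum_congr rfl (fun k hk =>
        perm_pair_const Y i k j (Finset.ne_of_mem_erase hk) hj)]
      rw [Finset.sum_const, Finset.card_erase_of_mem (Finset.mem_univ i),
        Finset.card_univ, Fintype.card_fin, nsmul_eq_mul]
      congr 1
      have : (1:ℕ) ≤ n := by omega
      push_cast [this]
      ring
    rw [herase, hDii i] at hrow
    linarith
  -- the key sum of squares
  set T : ℝ := ∑ σ : Equiv.Perm (Fin n), (∑ i, X i * Y (σ i))^2 with hT
  have hkey : ((n:ℝ) - 1) * T = (∑ k, (X k)^2) * ((n.factorial : ℝ) * A) := by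
    have hexp : T = ∑ i, ∑ j, (X i * X j) *
        (∑ σ : Equiv.Perm (Fin n), Y (σ i) * Y (σ j)) := by
      rw [hT]
      have h1 : ∀ σ : Equiv.Perm (Fin n), (∑ i, X i * Y (σ i))^2
          = ∑ i, ∑ j, (X i * X j) * (Y (σ i) * Y (σ j)) := by
        intro σ
        rw [sq, Finset.sum_mul_sum]
        exact Finset.sum_congr rfl fun i _ => Finset.sum_congr rfl fun j _ => by ring
      rw [Finset.sum_congr rfl (fun σ _ => h1 σ), Finset.sum_comm]
      refine Finset.sum_congr rfl fun i _ => ?_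
      rw [Finset.sum_comm]
      exact Finset.sum_congr rfl fun j _ => (Finset.mul_sum _ _ _).symm
    have hinner : ∀ i : Fin n, ((n:ℝ) - 1) * ∑ j, (X i * X j) *
        (∑ σ : Equiv.Perm (Fin n), Y (σ i) * Y (σ j))
        = (X i)^2 * ((n.factorial : ℝ) * A) := by
      intro i
      rw [← Finset.add_sum_erase _ _ (Finset.mem_univ i), hDii i]
      have hXer : ∑ j ∈ Finset.univ.erase i, X j = - X i := by
        have := Finset.add_sum_erase Finset.univ X (Finset.mem_univ i)
        rw [hX] at this
        linarith
      have h2 : ∑ j ∈ Finset.univ.erase i, (X i * X j) *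
          (∑ σ : Equiv.Perm (Fin n), Y (σ i) * Y (σ j))
          = ∑ j ∈ Finset.univ.erase i, X i * X j *
            ((∑ σ : Equiv.Perm (Fin n), Y (σ i) * Y (σ j))) := rfl
      have h3 : ((n:ℝ)-1) * ∑ j ∈ Finset.univ.erase i, (X i * X j) *
          (∑ σ : Equiv.Perm (Fin n), Y (σ i) * Y (σ j))
          = ∑ j ∈ Finset.univ.erase i, (X i * X j) *
            (((n:ℝ)-1) * ∑ σ : Equiv.Perm (Fin n), Y (σ i) * Y (σ j)) := by
        rw [Finset.mul_sum]
        exact Finset.sum_congr rfl fun j _ => by ring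
      have h4 : ∑ j ∈ Finset.univ.erase i, (X i * X j) *
            (((n:ℝ)-1) * ∑ σ : Equiv.Perm (Fin n), Y (σ i) * Y (σ j))
          = ∑ j ∈ Finset.univ.erase i, (X i * X j) * (-(((n-1).factorial : ℝ) * A)) := by
        exact Finset.sum_congr rfl fun j hj => by
          rw [hDij i j (Finset.ne_of_mem_erase hj)]
      have h5 : ∑ j ∈ Finset.univ.erase i, (X i * X j) * (-(((n-1).factorial : ℝ) * A))
          = X i * (-X i) * (-(((n-1).factorial : ℝ) * A)) := by
        rw [← hXer]
        conv_rhs => rw [Finset.mul_sum, Finset.sum_mul]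
      have hfac : (n.factorial : ℝ) = (n : ℝ) * ((n-1).factorial : ℝ) := by
        rw [← Nat.mul_factorial_pred hn0.ne']; push_cast; ring
      rw [mul_add, h3, h4, h5, hfac]
      ring
    calc ((n:ℝ) - 1) * T = ∑ i, ((n:ℝ)-1) * (∑ j, (X i * X j) *
        (∑ σ : Equiv.Perm (Fin n), Y (σ i) * Y (σ j))) := by
          rw [hexp, Finset.mul_sum]
      _ = ∑ i, (X i)^2 * ((n.factorial : ℝ) * A) := by
          exact Finset.sum_congr rfl fun i _ => hinner i
      _ = (∑ k, (X k)^2) * ((n.factorial : ℝ) * A) := by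
          rw [← Finset.sum_mul]
  -- finish
  rw [hmean]
  simp only [zero_div, sub_zero, mul_pow, ← Finset.mul_sum, ← hT]
  have hTval : T = (∑ k, (X k)^2) * ((n.factorial : ℝ) * A) / ((n:ℝ) - 1) := by
    field_simp
    linarith [hkey]
  rw [hTval]
  field_simp
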